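/- Define for a ∈ ℂ the 4-qubit state |ψ⁽⁹⁾(a)⟩ = a(|0000⟩+|0101⟩+|1010⟩+|1111⟩) − 2i(|0100⟩−|1001⟩−|1110⟩). Then (I₂ ⊗ (iσ_z) ⊗ I₂ ⊗ (iσ_z))|ψ⁽⁹⁾(a)⟩ = |ψ⁽⁹⁾(−a)⟩, where σ_z = [[1,0],[0,−1]]. -/
import Mathlib


noncomputable section

open Complex

/-- The 4-qubit state space `(ℂ²)^⊗4`, realized as functions on the computational basis. -/
abbrev Q4 := Fin 2 × Fin 2 × Fin 2 × Fin 2 → ℂ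

/-- The computational basis state `|ijkl⟩`. -/
def ket (i j k l : Fin 2) : Q4 := Pi.single (i, j, k, l) 1

/-- The factor-wise action `A ⊗ B ⊗ C ⊗ D` of four one-qubit operators on `(ℂ²)^⊗4`. -/
def tens4 (A B C D : Matrix (Fin 2) (Fin 2) ℂ) (ψ : Q4) : Q4 := fun x =>
  ∑ y : Fin 2 × Fin 2 × Fin 2 × Fin 2,
    A x.1 y.1 * B x.2.1 y.2.1 * C x.2.2.1 y.2.2.1 * D x.2.2.2 y.2.2.2 * ψ y

/-- The Pauli matrix `σ_z`. -/
def σz : Matrix (Fin 2) (Fin 2) ℂ := !![1, 0; 0, -1]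

/-- The family-9 state `|ψ⁽⁹⁾(a)⟩`. -/
def ψ9 (a : ℂ) : Q4 :=
  a • (ket 0 0 0 0 + ket 0 1 0 1 + ket 1 0 1 0 + ket 1 1 1 1)
  - (2 * I) • (ket 0 1 0 0 - ket 1 0 0 1 - ket 1 1 1 0)

set_option maxHeartbeats 2000000 in
/-- `(I₂ ⊗ (iσ_z) ⊗ I₂ ⊗ (iσ_z))|ψ⁽⁹⁾(a)⟩ = |ψ⁽⁹⁾(−a)⟩`. -/
theorem stmt_13 (a : ℂ) :
    tens4 1 (I • σz) 1 (I • σz) (ψ9 a) = ψ9 (-a) := by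
  funext x
  obtain ⟨i, j, k, l⟩ := x
  fin_cases i <;> fin_cases j <;> fin_cases k <;> fin_cases l <;>
    simp [tens4, ψ9, ket, σz, Fintype.sum_prod_type, Fin.sum_univ_two, Pi.single_apply, Matrix.one_apply,
      Matrix.smul_apply, Prod.ext_iff]
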